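/- Let R = ℤ[t, t^{-1}] and let K be the group of 3×3 matrices (A, B, C, D) := [[1, B, D], [0, A, C], [0, 0, 1]] over R with B, C, D ∈ R and A a power of t. Let N_0 = {(1, 0, 0, D) : D ∈ ℤ[t]} and Z' = {(1, 0, 0, D) : D ∈ 2ℤ + tℤ[t]}. Then N_0 and Z' are central (hence normal) subgroups of K, the quotient G := K/N_0 is torsion-free, the quotient H := K/Z' contains a nontrivial element of finite order, and consequently G and H are not isomorphic. -/

import Mathlib

open LaurentPolynomial

/-- The ring `R = ℤ[t, t⁻¹]` of Laurent polynomials over `ℤ`. -/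
abbrev LaurentZ : Type := LaurentPolynomial ℤ

/-- The upper triangular matrix `(A, B, C, D) = [[1, B, D], [0, A, C], [0, 0, 1]]`. -/
noncomputable def Mquad (A B C D : LaurentZ) : Matrix (Fin 3) (Fin 3) LaurentZ :=
  !![1, B, D; 0, A, C; 0, 0, 1]

/-- The set of invertible `3 × 3` matrices over `ℤ[t, t⁻¹]` of the form `(A, B, C, D)` with
`A = tᵏ` for some `k : ℤ`. -/
def Kset : Set (Matrix (Fin 3) (Fin 3) LaurentZ)ˣ :=
  { u | ∃ (k : ℤ) (B C D : LaurentZ),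
      (u : Matrix (Fin 3) (Fin 3) LaurentZ) = Mquad (T k) B C D }

/-- The December 2024 Mathlib definition of `Monoid.IsTorsionFree` (removed since):
every non-identity element has infinite order. -/
def Monoid.IsTorsionFree (G : Type*) [Monoid G] : Prop :=
  ∀ g : G, g ≠ 1 → ¬IsOfFinOrder g

/-! ### Auxiliary lemmas -/

lemma Mquad_mul (A B C D X Y Z W : LaurentZ) :
    Mquad A B C D * Mquad X Y Z W = Mquad (A*X) (Y + B*X) (A*Z + C) (D + B*Z + W) := by
  refine Matrix.ext fun i j => ?_
  fin_cases i <;> fin_cases j <;>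
    simp [Mquad, Matrix.mul_apply, Fin.sum_univ_three, Matrix.vecHead, Matrix.vecTail] <;> ring

lemma Mquad_one : Mquad 1 0 0 0 = 1 := by
  refine Matrix.ext fun i j => ?_
  fin_cases i <;> fin_cases j <;> simp [Mquad, Matrix.vecHead, Matrix.vecTail]

lemma Mquad_congr {A B C D A' B' C' D' : LaurentZ}
    (h1 : A = A') (h2 : B = B') (h3 : C = C') (h4 : D = D') :
    Mquad A B C D = Mquad A' B' C' D' := by rw [h1, h2, h3, h4]

lemma Mquad_inj {A B C D A' B' C' D' : LaurentZ} (h : Mquad A B C D = Mquad A' B' C' D') :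
    A = A' ∧ B = B' ∧ C = C' ∧ D = D' := by
  refine ⟨?_, ?_, ?_, ?_⟩
  · have := congrFun (congrFun h 1) 1; simpa [Mquad] using this
  · have := congrFun (congrFun h 0) 1; simpa [Mquad] using this
  · have := congrFun (congrFun h 1) 2; simpa [Mquad] using this
  · have := congrFun (congrFun h 0) 2; simpa [Mquad] using this

lemma T_inj {a b : ℤ} (h : (T a : LaurentZ) = T b) : a = b := by
  have h2 : (T a : LaurentZ).coeff a = (T b : LaurentZ).coeff a := by rw [h]
  rw [T_apply, T_apply, if_pos rfl] at h2
  by_contra hab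
  rw [if_neg (fun hb => hab hb.symm)] at h2
  exact one_ne_zero h2

lemma natCast_ne_zero' {n : ℕ} (hn : n ≠ 0) : (n : LaurentZ) ≠ 0 := by
  rw [← map_natCast Polynomial.toLaurent n, Ne, Polynomial.toLaurent_eq_zero]
  exact_mod_cast hn

lemma Mquad_D_mul (D E : LaurentZ) :
    Mquad 1 0 0 D * Mquad 1 0 0 E = Mquad 1 0 0 (D + E) := by
  rw [Mquad_mul]
  exact Mquad_congr (by ring) (by ring) (by ring) (by ring)

lemma Mquad_central (A B C D E : LaurentZ) :
    Mquad A B C D * Mquad 1 0 0 E = Mquad 1 0 0 E * Mquad A B C D := by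
  rw [Mquad_mul, Mquad_mul]
  exact Mquad_congr (by ring) (by ring) (by ring) (by ring)

lemma unit_inv_eq {u : (Matrix (Fin 3) (Fin 3) LaurentZ)ˣ} {D : LaurentZ}
    (h : (u : Matrix (Fin 3) (Fin 3) LaurentZ) = Mquad 1 0 0 D) :
    ((u⁻¹ : _ˣ) : Matrix (Fin 3) (Fin 3) LaurentZ) = Mquad 1 0 0 (-D) :=
  Units.inv_eq_of_mul_eq_one_right (by rw [h, Mquad_D_mul, add_neg_cancel, Mquad_one])

lemma pow_A (u : (Matrix (Fin 3) (Fin 3) LaurentZ)ˣ) (k : ℤ) (B C D : LaurentZ)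
    (h : (u : Matrix (Fin 3) (Fin 3) LaurentZ) = Mquad (T k) B C D) (n : ℕ) :
    ∃ B' C' D', ((u ^ n : _ˣ) : Matrix (Fin 3) (Fin 3) LaurentZ) = Mquad (T (n * k)) B' C' D' := by
  induction n with
  | zero =>
    exact ⟨0, 0, 0, by simp only [pow_zero, Units.val_one, Nat.cast_zero, zero_mul, T_zero,
      Mquad_one]⟩
  | succ n ih =>
    obtain ⟨B', C', D', hn⟩ := ih
    refine ⟨B + B' * T k, T (n * k) * C + C', D' + B' * C + D, ?_⟩
    rw [pow_succ, Units.val_mul, hn, h, Mquad_mul, ← T_add]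
    exact Mquad_congr (by push_cast; ring_nf) rfl rfl rfl

lemma pow_one_A (u : (Matrix (Fin 3) (Fin 3) LaurentZ)ˣ) (B C D : LaurentZ)
    (h : (u : Matrix (Fin 3) (Fin 3) LaurentZ) = Mquad 1 B C D) (n : ℕ) :
    ∃ e : ℕ, ((u ^ n : _ˣ) : Matrix (Fin 3) (Fin 3) LaurentZ) =
      Mquad 1 ((n : LaurentZ) * B) ((n : LaurentZ) * C) ((n : LaurentZ) * D + (e : LaurentZ) * (B * C)) := by
  induction n with
  | zero =>
    refine ⟨0, ?_⟩
    simp only [pow_zero, Units.val_one, Nat.cast_zero, zero_mul, add_zero, Mquad_one]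
  | succ n ih =>
    obtain ⟨e, hn⟩ := ih
    refine ⟨e + n, ?_⟩
    rw [pow_succ, Units.val_mul, hn, h, Mquad_mul]
    exact Mquad_congr (by ring) (by push_cast; ring) (by push_cast; ring) (by push_cast; ring)

lemma nD_poly {n : ℕ} (hn : n ≠ 0) {D : LaurentZ} {P : Polynomial ℤ}
    (h : (n : LaurentZ) * D = P.toLaurent) : ∃ Q : Polynomial ℤ, D = Q.toLaurent := by
  obtain ⟨m, D', hD'⟩ := exists_T_pow D
  have h1 : Polynomial.toLaurent ((n : Polynomial ℤ) * D') =
      Polynomial.toLaurent (P * Polynomial.X ^ m) := by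
    rw [map_mul, map_mul, hD', Polynomial.toLaurent_X_pow, map_natCast, ← mul_assoc, h]
  have h2 := Polynomial.toLaurent_injective h1
  have h3 : Polynomial.X ^ m ∣ D' := by
    rw [Polynomial.X_pow_dvd_iff]
    intro d hd
    have hc : ((n : Polynomial ℤ) * D').coeff d = 0 := by
      rw [h2, Polynomial.coeff_mul_X_pow', if_neg (by omega)]
    rw [← Polynomial.C_eq_natCast, Polynomial.coeff_C_mul] at hc
    have hnz : (n : ℤ) ≠ 0 := by exact_mod_cast hn
    exact (mul_eq_zero.mp hc).resolve_left hnz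
  obtain ⟨Q, hQ⟩ := h3
  refine ⟨Q, ?_⟩
  have hne : (T (m : ℤ) : LaurentZ) ≠ 0 := by
    intro h0
    have : (T (m : ℤ) : LaurentZ) * T (-(m : ℤ)) = 1 := by
      rw [← T_add, add_neg_cancel, T_zero]
    rw [h0, zero_mul] at this
    exact one_ne_zero this.symm
  apply mul_right_cancel₀ hne
  rw [← hD', hQ, map_mul, Polynomial.toLaurent_X_pow, mul_comm]

theorem stmt18 (K : Subgroup (Matrix (Fin 3) (Fin 3) LaurentZ)ˣ)
    (hK : (K : Set (Matrix (Fin 3) (Fin 3) LaurentZ)ˣ) = Kset) :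
    ∃ N₀ Z' : Subgroup K,
      -- `N₀ = {(1,0,0,D) : D ∈ ℤ[t]}`
      (N₀ : Set K) = { u : K | ∃ D : Polynomial ℤ,
          ((u : (Matrix (Fin 3) (Fin 3) LaurentZ)ˣ) : Matrix (Fin 3) (Fin 3) LaurentZ) =
            Mquad 1 0 0 D.toLaurent } ∧
      -- `Z' = {(1,0,0,D) : D ∈ 2ℤ + tℤ[t]}`
      (Z' : Set K) = { u : K | ∃ D : Polynomial ℤ, Even (D.coeff 0) ∧
          ((u : (Matrix (Fin 3) (Fin 3) LaurentZ)ˣ) : Matrix (Fin 3) (Fin 3) LaurentZ) =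
            Mquad 1 0 0 D.toLaurent } ∧
      -- central, hence normal
      N₀ ≤ Subgroup.center K ∧ Z' ≤ Subgroup.center K ∧ N₀.Normal ∧ Z'.Normal ∧
      (∀ (hN : N₀.Normal) (hZ : Z'.Normal),
        letI := hN; letI := hZ;
        -- `G := K ⧸ N₀` is torsion-free
        Monoid.IsTorsionFree (K ⧸ N₀) ∧
        -- `H := K ⧸ Z'` contains a nontrivial element of finite order
        (∃ x : K ⧸ Z', x ≠ 1 ∧ IsOfFinOrder x) ∧
        -- consequently `G` and `H` are not isomorphic
        IsEmpty ((K ⧸ N₀) ≃* (K ⧸ Z'))) := by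
  classical
  -- the two subgroups
  set SN : Set K := { u : K | ∃ D : Polynomial ℤ,
      ((u : (Matrix (Fin 3) (Fin 3) LaurentZ)ˣ) : Matrix (Fin 3) (Fin 3) LaurentZ) =
        Mquad 1 0 0 D.toLaurent } with hSN
  set SZ : Set K := { u : K | ∃ D : Polynomial ℤ, Even (D.coeff 0) ∧
      ((u : (Matrix (Fin 3) (Fin 3) LaurentZ)ˣ) : Matrix (Fin 3) (Fin 3) LaurentZ) =
        Mquad 1 0 0 D.toLaurent } with hSZ
  have coe_mul : ∀ u v : K,
      (((u * v : K) : (Matrix (Fin 3) (Fin 3) LaurentZ)ˣ) : Matrix (Fin 3) (Fin 3) LaurentZ)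
        = ((u : (Matrix (Fin 3) (Fin 3) LaurentZ)ˣ) : Matrix (Fin 3) (Fin 3) LaurentZ) *
          ((v : (Matrix (Fin 3) (Fin 3) LaurentZ)ˣ) : Matrix (Fin 3) (Fin 3) LaurentZ) :=
    fun u v => rfl
  -- proofs of subgroup axioms, as terms
  have NmulP : ∀ {u v : K}, u ∈ SN → v ∈ SN → u * v ∈ SN := by
    rintro u v ⟨P, hP⟩ ⟨Q, hQ⟩
    exact ⟨P + Q, by rw [coe_mul, hP, hQ, Mquad_D_mul, map_add]⟩
  have coe_inv : ∀ u : K,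
      (((u⁻¹ : K) : (Matrix (Fin 3) (Fin 3) LaurentZ)ˣ))
        = ((u : (Matrix (Fin 3) (Fin 3) LaurentZ)ˣ)⁻¹ : (Matrix (Fin 3) (Fin 3) LaurentZ)ˣ) :=
    fun u => rfl
  have NinvP : ∀ {u : K}, u ∈ SN → u⁻¹ ∈ SN := by
    rintro u ⟨P, hP⟩
    exact ⟨-P, by rw [show ((((u⁻¹ : K) : (Matrix (Fin 3) (Fin 3) LaurentZ)ˣ)) :
      Matrix (Fin 3) (Fin 3) LaurentZ) = _ from congrArg Units.val (coe_inv u),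
      unit_inv_eq hP, map_neg]⟩
  have NoneP : (1 : K) ∈ SN :=
    ⟨0, by simp only [OneMemClass.coe_one, Units.val_one, map_zero, Mquad_one]⟩
  have ZmulP : ∀ {u v : K}, u ∈ SZ → v ∈ SZ → u * v ∈ SZ := by
    rintro u v ⟨P, hP0, hP⟩ ⟨Q, hQ0, hQ⟩
    exact ⟨P + Q, by simp only [Polynomial.coeff_add]; exact hP0.add hQ0,
      by rw [coe_mul, hP, hQ, Mquad_D_mul, map_add]⟩
  have ZinvP : ∀ {u : K}, u ∈ SZ → u⁻¹ ∈ SZ := by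
    rintro u ⟨P, hP0, hP⟩
    exact ⟨-P, by simpa using hP0.neg, by rw [show ((((u⁻¹ : K) :
      (Matrix (Fin 3) (Fin 3) LaurentZ)ˣ)) : Matrix (Fin 3) (Fin 3) LaurentZ) = _ from
      congrArg Units.val (coe_inv u), unit_inv_eq hP, map_neg]⟩
  have ZoneP : (1 : K) ∈ SZ :=
    ⟨0, ⟨0, by simp⟩, by simp only [OneMemClass.coe_one, Units.val_one, map_zero, Mquad_one]⟩
  set NG : Subgroup K :=
    { carrier := SN, one_mem' := NoneP, mul_mem' := NmulP, inv_mem' := NinvP } with hNG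
  set ZG : Subgroup K :=
    { carrier := SZ, one_mem' := ZoneP, mul_mem' := ZmulP, inv_mem' := ZinvP } with hZG
  have memNG : ∀ u : K, u ∈ NG ↔ u ∈ SN := fun _ => Iff.rfl
  have memZG : ∀ u : K, u ∈ ZG ↔ u ∈ SZ := fun _ => Iff.rfl
  -- centrality
  have central : ∀ (u : K) (P : Polynomial ℤ),
      ((u : (Matrix (Fin 3) (Fin 3) LaurentZ)ˣ) : Matrix (Fin 3) (Fin 3) LaurentZ) =
        Mquad 1 0 0 P.toLaurent → u ∈ Subgroup.center K := by
    intro u P hu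
    rw [Subgroup.mem_center_iff]
    intro v
    have hv := v.2
    rw [← SetLike.mem_coe, hK] at hv
    obtain ⟨k, B, C, D', hv'⟩ := hv
    refine Subtype.ext (Units.ext ?_)
    rw [show (((v * u : K) : (Matrix (Fin 3) (Fin 3) LaurentZ)ˣ) :
        Matrix (Fin 3) (Fin 3) LaurentZ) = _ * _ from coe_mul v u,
      show (((u * v : K) : (Matrix (Fin 3) (Fin 3) LaurentZ)ˣ) :
        Matrix (Fin 3) (Fin 3) LaurentZ) = _ * _ from coe_mul u v, hu, hv', Mquad_central]
  have hNle : NG ≤ Subgroup.center K := by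
    intro u hu; obtain ⟨P, hP⟩ := (memNG u).mp hu; exact central u P hP
  have hZle : ZG ≤ Subgroup.center K := by
    intro u hu; obtain ⟨P, _, hP⟩ := (memZG u).mp hu; exact central u P hP
  have normal_of_le : ∀ {S : Subgroup K}, S ≤ Subgroup.center K → S.Normal := by
    intro S hS
    constructor
    intro x hx g
    have hcom := Subgroup.mem_center_iff.mp (hS hx) g
    rw [hcom, mul_inv_cancel_right]
    exact hx
  refine ⟨NG, ZG, rfl, rfl, hNle, hZle, normal_of_le hNle, normal_of_le hZle, ?_⟩
  intro hN hZ
  -- torsion-free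
  have htf : Monoid.IsTorsionFree (K ⧸ NG) := by
    intro g hg hfin
    obtain ⟨u, rfl⟩ := QuotientGroup.mk_surjective g
    rw [isOfFinOrder_iff_pow_eq_one] at hfin
    obtain ⟨n, hn, hgn⟩ := hfin
    rw [← QuotientGroup.mk_pow, QuotientGroup.eq_one_iff] at hgn
    obtain ⟨P, hP⟩ := (memNG _).mp hgn
    rw [show (((u ^ n : K) : (Matrix (Fin 3) (Fin 3) LaurentZ)ˣ) :
        Matrix (Fin 3) (Fin 3) LaurentZ)
      = (((u : (Matrix (Fin 3) (Fin 3) LaurentZ)ˣ) ^ n : (Matrix (Fin 3) (Fin 3) LaurentZ)ˣ) :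
        Matrix (Fin 3) (Fin 3) LaurentZ) from rfl] at hP
    have hu2 := u.2
    rw [← SetLike.mem_coe, hK] at hu2
    obtain ⟨k, B, C, D, hu⟩ := hu2
    obtain ⟨B', C', D', h1⟩ := pow_A _ k B C D hu n
    obtain ⟨hA, -, -, -⟩ := Mquad_inj (h1.symm.trans hP)
    have hk : (n : ℤ) * k = 0 := T_inj (by rw [hA, T_zero])
    have hk0 : k = 0 := by
      rcases mul_eq_zero.mp hk with h | h
      · exact absurd h (by exact_mod_cast hn.ne')
      · exact h
    rw [hk0, T_zero] at hu
    obtain ⟨e, h2⟩ := pow_one_A _ B C D hu n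
    obtain ⟨-, hB, hC, hD⟩ := Mquad_inj (h2.symm.trans hP)
    have hnz : ((n : ℕ) : LaurentZ) ≠ 0 := natCast_ne_zero' hn.ne'
    have hB0 : B = 0 := (mul_eq_zero.mp hB).resolve_left hnz
    have hC0 : C = 0 := (mul_eq_zero.mp hC).resolve_left hnz
    rw [hB0, zero_mul, mul_zero, add_zero] at hD
    obtain ⟨Q, hQ⟩ := nD_poly hn.ne' hD
    apply hg
    rw [QuotientGroup.eq_one_iff]
    exact (memNG u).mpr ⟨Q, by rw [hu, hB0, hC0, hQ]⟩
  -- torsion element in K ⧸ ZG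
  have hU1inv : Mquad 1 0 0 1 * Mquad 1 0 0 (-1) = 1 := by
    rw [Mquad_D_mul, add_neg_cancel, Mquad_one]
  have hU1inv' : Mquad 1 0 0 (-1) * Mquad 1 0 0 1 = 1 := by
    rw [Mquad_D_mul, neg_add_cancel, Mquad_one]
  set U1 : (Matrix (Fin 3) (Fin 3) LaurentZ)ˣ :=
    ⟨Mquad 1 0 0 1, Mquad 1 0 0 (-1), hU1inv, hU1inv'⟩ with hU1def
  have hU1 : (U1 : Matrix (Fin 3) (Fin 3) LaurentZ) = Mquad 1 0 0 1 := rfl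
  have hU1K : U1 ∈ K := by
    rw [← SetLike.mem_coe, hK]
    exact ⟨0, 0, 0, 1, by rw [hU1, T_zero]⟩
  set u0 : K := ⟨U1, hU1K⟩ with hu0def
  have htor : ∃ x : K ⧸ ZG, x ≠ 1 ∧ IsOfFinOrder x := by
    refine ⟨QuotientGroup.mk u0, ?_, ?_⟩
    · intro h1
      rw [QuotientGroup.eq_one_iff] at h1
      obtain ⟨P, hP0, hP⟩ := (memZG u0).mp h1
      have h3 : (1 : LaurentZ) = P.toLaurent := (Mquad_inj (hU1.symm.trans hP)).2.2.2
      have h4 : P = 1 := Polynomial.toLaurent_injective (by rw [← h3, map_one])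
      rw [h4] at hP0
      simp [Int.even_iff, Polynomial.coeff_one] at hP0
    · rw [isOfFinOrder_iff_pow_eq_one]
      refine ⟨2, two_pos, ?_⟩
      rw [← QuotientGroup.mk_pow, QuotientGroup.eq_one_iff]
      refine (memZG _).mpr ⟨1 + 1, ?_, ?_⟩
      · simp only [Polynomial.coeff_add, Polynomial.coeff_one]
        exact ⟨1, by norm_num⟩
      · rw [show (((u0 ^ 2 : K) : (Matrix (Fin 3) (Fin 3) LaurentZ)ˣ) :
            Matrix (Fin 3) (Fin 3) LaurentZ)
          = (U1 : Matrix (Fin 3) (Fin 3) LaurentZ) * (U1 : Matrix (Fin 3) (Fin 3) LaurentZ)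
            from by rw [show ((u0 ^ 2 : K) : (Matrix (Fin 3) (Fin 3) LaurentZ)ˣ) = U1 ^ 2
              from rfl, sq, Units.val_mul], hU1, Mquad_D_mul, map_add, map_one]
  refine ⟨htf, htor, ⟨fun φ => ?_⟩⟩
  obtain ⟨x, hx, hfin⟩ := htor
  exact htf (φ.symm x) (fun h => hx (φ.symm.injective (h.trans (map_one φ.symm).symm)))
    (φ.symm.toMonoidHom.isOfFinOrder hfin)
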